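/- The transversal CNOT implements the logical CNOT on the Steane code: letting U denote the product over i = 1,…,7 of the CNOT gate with control the i-th qubit of the first 7-qubit block and target the i-th qubit of the second 7-qubit block, one has U(|a_L⟩ ⊗ |b_L⟩) = |a_L⟩ ⊗ |(a⊕b)_L⟩ for all a, b ∈ {0,1}. -/
import Mathlib


/-- The 3×7 parity-check matrix of the [7,4] Hamming code over F₂. -/
def Hmat : Matrix (Fin 3) (Fin 7) (ZMod 2) :=
  !![1,0,1,0,1,0,1; 0,1,1,0,0,1,1; 0,0,0,1,1,1,1]

/-- The Steane logical state `|a_L⟩` for `a ∈ {0,1}`: the equally weighted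
superposition `(1/√8) Σ |v⟩` over all Hamming codewords `v` whose Hamming weight
has parity `a`. -/
noncomputable def ketL (a : ZMod 2) : (Fin 7 → ZMod 2) → ℂ := fun w =>
  if Hmat.mulVec w = 0 ∧ (hammingNorm w : ZMod 2) = a then (Real.sqrt 8 : ℂ)⁻¹ else 0

/-- States of the 14-qubit Hilbert space `(ℂ²)^{⊗7} ⊗ (ℂ²)^{⊗7}`, represented as
functions of the pair of basis labels. -/
abbrev St2 := (Fin 7 → ZMod 2) → (Fin 7 → ZMod 2) → ℂ

/-- The tensor product of two 7-qubit states. -/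
noncomputable def tens (φ ψ : (Fin 7 → ZMod 2) → ℂ) : St2 := fun u w => φ u * ψ w

/-- The CNOT gate with control the `i`-th qubit of the first block and target the
`i`-th qubit of the second block (a self-inverse basis permutation `|x⟩|y⟩ ↦
|x⟩|y⊕x⟩` on the `i`-th qubit pair). -/
def cnotOp (i : Fin 7) (ψ : St2) : St2 :=
  fun u w => ψ u (Function.update w i (w i + u i))

/-- The transversal CNOT: the product over `i = 1,…,7` of the CNOT gates
`cnotOp i`. -/
def transCNOT : St2 → St2 :=
  (List.finRange 7).foldr (fun i f => cnotOp i ∘ f) id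

lemma transCNOT_apply (ψ : St2) (u w : Fin 7 → ZMod 2) :
    transCNOT ψ u w = ψ u (w + u) := by
  show ψ u _ = ψ u (w + u)
  congr 1
  funext j
  fin_cases j <;> norm_num [Function.update, Fin.ext_iff]

lemma hammingNorm_cast (w : Fin 7 → ZMod 2) :
    (hammingNorm w : ZMod 2) = ∑ j, w j := by
  rw [hammingNorm, Finset.card_eq_sum_ones, Nat.cast_sum, Finset.sum_filter]
  refine Finset.sum_congr rfl fun j _ => ?_
  revert w
  intro w
  have : ∀ x : ZMod 2, (if x ≠ 0 then ((1 : ℕ) : ZMod 2) else 0) = x := by decide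
  exact this (w j)

/-- The transversal CNOT implements the logical CNOT on the Steane code:
`U(|a_L⟩ ⊗ |b_L⟩) = |a_L⟩ ⊗ |(a⊕b)_L⟩` for all `a, b ∈ {0,1}`. -/
theorem transversal_CNOT_is_logical_CNOT :
    ∀ a b : ZMod 2, transCNOT (tens (ketL a) (ketL b)) = tens (ketL a) (ketL (a + b)) := by
  intro a b
  funext u w
  rw [transCNOT_apply]
  show ketL a u * ketL b (w + u) = ketL a u * ketL (a + b) w
  by_cases hu : Hmat.mulVec u = 0 ∧ (hammingNorm u : ZMod 2) = a
  · congr 1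
    unfold ketL
    congr 1
    have h1 : Hmat.mulVec (w + u) = 0 ↔ Hmat.mulVec w = 0 := by
      rw [Matrix.mulVec_add, hu.1, add_zero]
    have h2 : (hammingNorm (w + u) : ZMod 2) = (hammingNorm w : ZMod 2) + a := by
      rw [hammingNorm_cast, hammingNorm_cast, ← hu.2, hammingNorm_cast,
        ← Finset.sum_add_distrib]
      rfl
    have aux : ∀ x y z : ZMod 2, x + y = z ↔ x = y + z := by decide
    rw [eq_iff_iff]
    constructor
    · rintro ⟨hc, hp⟩
      refine ⟨h1.mp hc, ?_⟩
      rw [h2] at hp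
      rw [aux] at hp
      rw [hp, add_comm]
    · rintro ⟨hc, hp⟩
      refine ⟨h1.mpr hc, ?_⟩
      rw [h2, hp, add_comm a b, aux]
      rw [add_comm]
  · have : ketL a u = 0 := by simp [ketL, hu]
    rw [this, zero_mul, zero_mul]
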